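/- Let E be a real separable Banach space, let (S_n)_{n≥1} and S be standard Borel spaces, and let X : Ω → E, Y_n : Ω → S_n, Y : Ω → S be random variables on a probability space (Ω, ℱ, P). Assume the σ-algebras σ(Y_n) are increasing in n and ⋁_n σ(Y_n) = σ(Y). Let π_n be a regular conditional distribution for X given Y_n, and π a regular conditional distribution for X given Y. Then for P-almost every ω, the sequence of probability measures π_n(Y_n(ω), ·) on E converges weakly to π(Y(ω), ·) as n → ∞. -/

import Mathlib

open MeasureTheory Filter
open scoped Topology

noncomputable section Stmt8All
open MeasureTheory Filter Set
open scoped Topology ENNReal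
variable {E : Type*} [MetricSpace E]

/-- Auxiliary bump function: continuous approximation to the indicator of a ball. -/
def stmt8Bump (q : E) (r r' : ℝ) : BoundedContinuousFunction E ℝ :=
  BoundedContinuousFunction.mkOfBound
    ⟨fun x => max 0 (min 1 ((r' - dist x q) / (r' - r))), by
      apply Continuous.max continuous_const
      exact Continuous.min continuous_const
        (((continuous_const.sub (continuous_id.dist continuous_const))).div_const _)⟩
    1 (by
      intro x y
      rw [Real.dist_eq, abs_sub_le_iff]
      constructor <;>
      · dsimp only [ContinuousMap.coe_mk]
        linarith [le_max_left (0:ℝ) (min 1 ((r' - dist x q) / (r' - r))),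
          le_max_left (0:ℝ) (min 1 ((r' - dist y q) / (r' - r))),
          max_le zero_le_one (min_le_left (1:ℝ) ((r' - dist x q) / (r' - r))),
          max_le zero_le_one (min_le_left (1:ℝ) ((r' - dist y q) / (r' - r)))])

lemma stmt8Bump_apply (q : E) (r r' : ℝ) (x : E) :
    stmt8Bump q r r' x = max 0 (min 1 ((r' - dist x q) / (r' - r))) := rfl

lemma stmt8Bump_nonneg (q : E) (r r' : ℝ) (x : E) : 0 ≤ stmt8Bump q r r' x :=
  le_max_left _ _

lemma stmt8Bump_le_one (q : E) (r r' : ℝ) (x : E) : stmt8Bump q r r' x ≤ 1 :=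
  max_le zero_le_one (min_le_left _ _)

lemma stmt8Bump_eq_one {q : E} {r r' : ℝ} {x : E} (hr : r < r') (h : dist x q ≤ r) :
    stmt8Bump q r r' x = 1 := by
  rw [stmt8Bump_apply]
  have hpos : 0 < r' - r := by linarith
  have : (1:ℝ) ≤ (r' - dist x q) / (r' - r) := by
    rw [le_div_iff₀ hpos]; linarith
  rw [min_eq_left this, max_eq_right zero_le_one]

lemma stmt8Bump_eq_zero {q : E} {r r' : ℝ} {x : E} (hr : r < r') (h : r' ≤ dist x q) :
    stmt8Bump q r r' x = 0 := by
  rw [stmt8Bump_apply]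
  have hpos : 0 < r' - r := by linarith
  have hle : (r' - dist x q) / (r' - r) ≤ 0 :=
    div_nonpos_of_nonpos_of_nonneg (by linarith) hpos.le
  rw [max_eq_left (le_trans (min_le_right _ _) hle)]

/-- Pointwise max of a list of bounded continuous functions (with 0). -/
def stmt8Sup (l : List (BoundedContinuousFunction E ℝ)) : BoundedContinuousFunction E ℝ :=
  l.foldr (· ⊔ ·) 0

lemma stmt8Sup_nil : stmt8Sup ([] : List (BoundedContinuousFunction E ℝ)) = 0 := rfl

lemma stmt8Sup_cons (f : BoundedContinuousFunction E ℝ) (l : List (BoundedContinuousFunction E ℝ)) :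
    stmt8Sup (f :: l) = f ⊔ stmt8Sup l := rfl

lemma stmt8Sup_nonneg (l : List (BoundedContinuousFunction E ℝ)) (x : E) :
    0 ≤ stmt8Sup l x := by
  induction l with
  | nil => simp [stmt8Sup_nil]
  | cons f t ih =>
    rw [stmt8Sup_cons]
    simp only [BoundedContinuousFunction.coe_sup, Pi.sup_apply]
    exact le_trans ih (le_max_right _ _)

lemma stmt8Sup_le {l : List (BoundedContinuousFunction E ℝ)} {x : E} {c : ℝ}
    (hc : 0 ≤ c) (h : ∀ f ∈ l, f x ≤ c) : stmt8Sup l x ≤ c := by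
  induction l with
  | nil => simpa [stmt8Sup_nil] using hc
  | cons f t ih =>
    rw [stmt8Sup_cons]
    simp only [BoundedContinuousFunction.coe_sup, Pi.sup_apply]
    exact max_le (h f List.mem_cons_self) (ih fun g hg => h g (List.mem_cons_of_mem _ hg))

lemma le_stmt8Sup {l : List (BoundedContinuousFunction E ℝ)} {f : BoundedContinuousFunction E ℝ}
    (hf : f ∈ l) (x : E) : f x ≤ stmt8Sup l x := by
  induction l with
  | nil => simp at hf
  | cons g t ih =>
    rw [stmt8Sup_cons]
    simp only [BoundedContinuousFunction.coe_sup, Pi.sup_apply]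
    rcases List.mem_cons.mp hf with h | h
    · subst h; exact le_max_left _ _
    · exact le_trans (ih h) (le_max_right _ _)


/-- If integrals of the countable family of finite maxima of rational bump functions converge,
then integrals of all bounded continuous functions converge (weak convergence). -/
lemma stmt8_tendsto_of_family
    {E : Type*} [MetricSpace E] [MeasurableSpace E] [OpensMeasurableSpace E]
    {μ : Measure E} [IsProbabilityMeasure μ] {μs : ℕ → Measure E}
    [∀ n, IsProbabilityMeasure (μs n)]
    {D : Set E} (hD : D.Countable) (hDdense : Dense D)
    (h : ∀ L : List (↥D × ℚ × ℚ),
      Tendsto (fun n => ∫ x, stmt8Sup (L.map fun p => stmt8Bump (p.1 : E) p.2.1 p.2.2) x ∂μs n)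
        atTop (𝓝 (∫ x, stmt8Sup (L.map fun p => stmt8Bump (p.1 : E) p.2.1 p.2.2) x ∂μ)))
    (g : BoundedContinuousFunction E ℝ) :
    Tendsto (fun n => ∫ x, g x ∂μs n) atTop (𝓝 (∫ x, g x ∂μ)) := by
  apply BoundedContinuousFunction.tendsto_integral_of_forall_integral_le_liminf_integral
  intro f f_nn
  apply MeasureTheory.integral_le_liminf_integral_of_forall_isOpen_measure_le_liminf_measure f_nn
  intro G G_open
  rcases G.eq_empty_or_nonempty with rfl | hGne
  · simp
  set bp : ↥D × ℚ × ℚ → BoundedContinuousFunction E ℝ :=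
    fun p => stmt8Bump (p.1 : E) p.2.1 p.2.2 with hbp
  set A : Set (↥D × ℚ × ℚ) :=
    {p | (p.2.1 : ℝ) < (p.2.2 : ℝ) ∧ Metric.ball (p.1 : E) (p.2.2 : ℝ) ⊆ G} with hA
  have hcover : ∀ x ∈ G, ∃ p ∈ A, dist x (p.1 : E) ≤ (p.2.1 : ℝ) := by
    intro x hx
    obtain ⟨ε, hε, hball⟩ := Metric.isOpen_iff.mp G_open x hx
    obtain ⟨r', hr'0, hr'ε⟩ := exists_rat_btwn (show (0:ℝ) < ε / 2 by positivity)
    obtain ⟨r, hr0, hrr'⟩ := exists_rat_btwn hr'0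
    obtain ⟨q, hqD, hq⟩ := hDdense.exists_dist_lt x (show (0:ℝ) < r from hr0)
    refine ⟨(⟨q, hqD⟩, r, r'), ⟨hrr', fun y hy => hball ?_⟩, ?_⟩
    · have hyq : dist y q < (r' : ℝ) := Metric.mem_ball.mp hy
      have : dist y x ≤ dist y q + dist q x := dist_triangle _ _ _
      rw [dist_comm q x] at this
      exact Metric.mem_ball.mpr (by push_cast at *; nlinarith)
    · exact le_of_lt hq
  obtain ⟨x₀, hx₀⟩ := hGne
  obtain ⟨p₀, hp₀, _⟩ := hcover x₀ hx₀
  haveI := hD.to_subtype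
  obtain ⟨e, he⟩ := (Set.to_countable A).exists_eq_range ⟨p₀, hp₀⟩
  have heA : ∀ k, e k ∈ A := fun k => he ▸ Set.mem_range_self k
  set F : ℕ → BoundedContinuousFunction E ℝ :=
    fun n => stmt8Sup (((List.range n).map e).map bp) with hF
  have hbump_le : ∀ p ∈ A, ∀ x, bp p x ≤ G.indicator 1 x := by
    intro p hp x
    by_cases hx : x ∈ G
    · simpa [Set.indicator_of_mem hx] using stmt8Bump_le_one (p.1 : E) p.2.1 p.2.2 x
    · have hd : (p.2.2 : ℝ) ≤ dist x (p.1 : E) := by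
        by_contra hlt
        exact hx (hp.2 (Metric.mem_ball.mpr (lt_of_not_ge hlt)))
      rw [Set.indicator_of_notMem hx]
      exact le_of_eq (stmt8Bump_eq_zero hp.1 hd)
  have hFle : ∀ n x, F n x ≤ G.indicator 1 x := by
    intro n x
    apply stmt8Sup_le (Set.indicator_nonneg (fun _ _ => zero_le_one) x)
    intro f hf
    rw [List.mem_map] at hf
    obtain ⟨p, hp, rfl⟩ := hf
    rw [List.mem_map] at hp
    obtain ⟨k, _, rfl⟩ := hp
    exact hbump_le _ (heA k) x
  have hFle1 : ∀ n x, F n x ≤ 1 := fun n x =>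
    le_trans (hFle n x) (Set.indicator_le_self' (fun _ _ => zero_le_one) x)
  have hFtend : ∀ x, Tendsto (fun n => F n x) atTop (𝓝 (G.indicator 1 x)) := by
    intro x
    by_cases hx : x ∈ G
    · obtain ⟨p, hpA, hpr⟩ := hcover x hx
      rw [he] at hpA
      obtain ⟨k, rfl⟩ := hpA
      have hev : ∀ n ≥ k + 1, F n x = 1 := by
        intro n hn
        refine le_antisymm (stmt8Sup_le zero_le_one ?_) ?_
        · intro f hf
          rw [List.mem_map] at hf
          obtain ⟨p', _, rfl⟩ := hf
          exact stmt8Bump_le_one _ _ _ x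
        · have hmem : bp (e k) ∈ ((List.range n).map e).map bp :=
            List.mem_map_of_mem (f := bp) (List.mem_map_of_mem (f := e) (List.mem_range.mpr (by omega)))
          have h1 : bp (e k) x = 1 := stmt8Bump_eq_one (heA k).1 hpr
          calc (1:ℝ) = bp (e k) x := h1.symm
            _ ≤ F n x := le_stmt8Sup hmem x
      rw [Set.indicator_of_mem hx]
      refine Tendsto.congr' ?_ tendsto_const_nhds
      filter_upwards [eventually_ge_atTop (k + 1)] with n hn
      exact (hev n hn).symm
    · have hzero : ∀ n, F n x = 0 := fun n =>
        le_antisymm (by simpa [Set.indicator_of_notMem hx] using hFle n x)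
          (stmt8Sup_nonneg _ x)
      rw [Set.indicator_of_notMem hx]
      simpa [hzero] using tendsto_const_nhds
  have hInt : ∀ n k, ∫ x, F n x ∂μs k ≤ (μs k G).toReal := by
    intro n k
    calc ∫ x, F n x ∂μs k
        ≤ ∫ x, G.indicator 1 x ∂μs k :=
          integral_mono ((F n).integrable _)
            ((integrable_const (1:ℝ)).indicator G_open.measurableSet) (hFle n)
      _ = (μs k G).toReal := integral_indicator_one G_open.measurableSet
  have hLim : ∀ n, ∫ x, F n x ∂μ ≤ atTop.liminf (fun k => (μs k G).toReal) := by
    intro n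
    have ht := h ((List.range n).map e)
    have hliminf : atTop.liminf (fun k => ∫ x, F n x ∂μs k) = ∫ x, F n x ∂μ := ht.liminf_eq
    rw [← hliminf]
    have hbu : IsBoundedUnder (· ≥ ·) atTop (fun k => ∫ x, F n x ∂μs k) :=
      ⟨0, eventually_map.mpr (Eventually.of_forall fun k =>
        integral_nonneg fun x => stmt8Sup_nonneg _ x)⟩
    have hcb : IsCoboundedUnder (· ≥ ·) atTop (fun k => (μs k G).toReal) := by
      apply IsBoundedUnder.isCoboundedUnder_ge
      exact ⟨1, eventually_map.mpr (Eventually.of_forall fun k => by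
        simpa using ENNReal.toReal_mono ENNReal.one_ne_top (prob_le_one (μ := μs k) (s := G)))⟩
    exact liminf_le_liminf (Eventually.of_forall (hInt n)) hbu hcb
  have hDCT : Tendsto (fun n => ∫ x, F n x ∂μ) atTop (𝓝 ((μ G).toReal)) := by
    rw [show (μ G).toReal = μ.real G from rfl, ← integral_indicator_one G_open.measurableSet]
    exact tendsto_integral_of_dominated_convergence (fun _ => (1:ℝ))
      (fun n => (F n).continuous.measurable.aestronglyMeasurable) (integrable_const 1)
      (fun n => Eventually.of_forall fun x => by
        rw [Real.norm_of_nonneg (stmt8Sup_nonneg _ x)]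
        exact hFle1 n x)
      (Eventually.of_forall hFtend)
  have hreal : (μ G).toReal ≤ atTop.liminf (fun k => (μs k G).toReal) :=
    le_of_tendsto' hDCT hLim
  have hne : atTop.liminf (fun k => μs k G) ≤ 1 := by
    refine le_trans (liminf_le_liminf (f := (atTop : Filter ℕ)) (u := fun k => μs k G)
      (v := fun _ => (1:ℝ≥0∞)) (Eventually.of_forall fun k => prob_le_one)) ?_
    simp [liminf_const]
  have htoReal := ENNReal.liminf_toReal_eq (f := (atTop : Filter ℕ)) (b := 1) (u := fun k => μs k G) ENNReal.one_ne_top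
    (Eventually.of_forall fun k => prob_le_one)
  rw [htoReal] at hreal
  exact (ENNReal.toReal_le_toReal (measure_ne_top μ G)
    (lt_of_le_of_lt hne ENNReal.one_lt_top).ne).mp hreal
/-- Identification of the conditional expectation of `f ∘ X` given `σ(Y)` with the integral
of `f` against the regular conditional distribution `π`. -/
lemma stmt8_condexp_eq
    {E : Type*} [NormedAddCommGroup E] [NormedSpace ℝ E] [CompleteSpace E]
    [TopologicalSpace.SeparableSpace E] [MeasurableSpace E] [BorelSpace E]
    {Ω : Type*} [MeasurableSpace Ω] (P : Measure Ω) [IsProbabilityMeasure P]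
    {S : Type*} [MeasurableSpace S] [StandardBorelSpace S]
    {X : Ω → E} {Y : Ω → S} (hX : Measurable X) (hY : Measurable Y)
    (π : S → Measure E) (hπprob : ∀ y, IsProbabilityMeasure (π y))
    (hπmeas : ∀ ⦃A : Set E⦄, MeasurableSet A → Measurable fun y => π y A)
    (hπrcd : ∀ ⦃A : Set E⦄, MeasurableSet A → ∀ ⦃B : Set S⦄, MeasurableSet B →
      P (Y ⁻¹' B ∩ X ⁻¹' A) = ∫⁻ ω in Y ⁻¹' B, π (Y ω) A ∂P)
    (f : BoundedContinuousFunction E ℝ) :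
    (P[fun ω => f (X ω)|MeasurableSpace.comap Y inferInstance]) =ᵐ[P]
      fun ω => ∫ x, f x ∂π (Y ω) := by
  haveI : Nonempty E := ⟨0⟩
  haveI : SecondCountableTopology E := UniformSpace.secondCountable_of_separable E
  set κ : ProbabilityTheory.Kernel S E :=
    ⟨π, Measure.measurable_of_measurable_coe _ fun A hA => hπmeas hA⟩ with hκdef
  haveI : ProbabilityTheory.IsMarkovKernel κ := ⟨fun y => hπprob y⟩
  haveI : IsProbabilityMeasure (P.map Y) := Measure.isProbabilityMeasure_map hY.aemeasurable
  have hκ : P.map (fun ω => (Y ω, X ω)) = (P.map Y).compProd κ := by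
    refine MeasureTheory.ext_of_generate_finite _ generateFrom_prod.symm isPiSystem_prod ?_ ?_
    · rintro s ⟨B, hB, A, hA, rfl⟩
      simp only [Set.mem_setOf_eq] at hB hA
      rw [Measure.map_apply (hY.prodMk hX) (hB.prod hA), Set.mk_preimage_prod,
        Measure.compProd_apply_prod hB hA, hπrcd hA hB,
        setLIntegral_map hB (κ.measurable_coe hA) hY]
      rfl
    · rw [Measure.map_apply (hY.prodMk hX) MeasurableSet.univ]
      simp
  have h1 : ∀ᵐ y ∂(P.map Y), κ y = ProbabilityTheory.condDistrib X Y P y :=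
    (ProbabilityTheory.condDistrib_ae_eq_of_measure_eq_compProd Y hX.aemeasurable hκ).mono fun y h => h.symm
  have h2 : ∀ᵐ ω ∂P, κ (Y ω) = ProbabilityTheory.condDistrib X Y P (Y ω) :=
    ae_of_ae_map hY.aemeasurable h1
  have hint : Integrable (fun ω => f (X ω)) P := by
    refine Integrable.mono' (integrable_const ‖f‖)
      (f.continuous.measurable.comp hX).aestronglyMeasurable
      (Eventually.of_forall fun ω => ?_)
    exact f.norm_coe_le_norm (X ω)
  have h3 := ProbabilityTheory.condExp_ae_eq_integral_condDistrib (μ := P) hY hX.aemeasurable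
    f.continuous.stronglyMeasurable hint
  filter_upwards [h2, h3] with ω h2ω h3ω
  rw [h3ω, ← h2ω]
  rfl

end Stmt8All

/-- Let `X` be an `E`-valued random variable (`E` a real separable Banach space),
`Y_n` and `Y` random variables with values in standard Borel spaces, with `σ(Y_n)` increasing
and `⋁_n σ(Y_n) = σ(Y)`. If `π_n` is a regular conditional distribution of `X` given `Y_n` and
`π` one of `X` given `Y`, then for `P`-a.e. `ω`, `π_n(Y_n(ω), ·)` converges weakly to
`π(Y(ω), ·)`. -/
theorem stmt8 {E : Type*} [NormedAddCommGroup E] [NormedSpace ℝ E] [CompleteSpace E]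
    [TopologicalSpace.SeparableSpace E] [MeasurableSpace E] [BorelSpace E]
    {Ω : Type*} [MeasurableSpace Ω] (P : Measure Ω) [IsProbabilityMeasure P]
    (S : ℕ → Type*) [∀ n, MeasurableSpace (S n)] [∀ n, StandardBorelSpace (S n)]
    (S' : Type*) [MeasurableSpace S'] [StandardBorelSpace S']
    (X : Ω → E) (Y : ∀ n, Ω → S n) (Y' : Ω → S')
    (hX : Measurable X) (hY : ∀ n, Measurable (Y n)) (hY' : Measurable Y')
    (hmono : Monotone fun n => MeasurableSpace.comap (Y n) inferInstance)
    (hsup : (⨆ n, MeasurableSpace.comap (Y n) inferInstance)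
      = MeasurableSpace.comap Y' inferInstance)
    (π : ∀ n, S n → Measure E) (π' : S' → Measure E)
    (hπprob : ∀ n y, IsProbabilityMeasure (π n y))
    (hπ'prob : ∀ y, IsProbabilityMeasure (π' y))
    (hπmeas : ∀ n ⦃A : Set E⦄, MeasurableSet A → Measurable fun y => π n y A)
    (hπ'meas : ∀ ⦃A : Set E⦄, MeasurableSet A → Measurable fun y => π' y A)
    (hπrcd : ∀ n ⦃A : Set E⦄, MeasurableSet A → ∀ ⦃B : Set (S n)⦄, MeasurableSet B →
      P (Y n ⁻¹' B ∩ X ⁻¹' A) = ∫⁻ ω in Y n ⁻¹' B, π n (Y n ω) A ∂P)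
    (hπ'rcd : ∀ ⦃A : Set E⦄, MeasurableSet A → ∀ ⦃B : Set S'⦄, MeasurableSet B →
      P (Y' ⁻¹' B ∩ X ⁻¹' A) = ∫⁻ ω in Y' ⁻¹' B, π' (Y' ω) A ∂P) :
    ∀ᵐ ω ∂P, ∀ g : BoundedContinuousFunction E ℝ,
      Tendsto (fun n => ∫ x, g x ∂π n (Y n ω)) atTop (𝓝 (∫ x, g x ∂π' (Y' ω))) := by
  -- Step 1: single test function convergence via Lévy's upward martingale convergence theorem
  have key : ∀ f : BoundedContinuousFunction E ℝ, ∀ᵐ ω ∂P,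
      Tendsto (fun n => ∫ x, f x ∂π n (Y n ω)) atTop (𝓝 (∫ x, f x ∂π' (Y' ω))) := by
    intro f
    set ℱ : Filtration ℕ ‹MeasurableSpace Ω› :=
      ⟨fun n => MeasurableSpace.comap (Y n) inferInstance, hmono,
        fun n => (hY n).comap_le⟩ with hℱ
    have hcond := MeasureTheory.tendsto_ae_condExp (μ := P) (ℱ := ℱ) (fun ω => f (X ω))
    have hsup' : (⨆ n, (ℱ n : MeasurableSpace Ω))
        = MeasurableSpace.comap Y' inferInstance := hsup
    rw [hsup'] at hcond
    have heqn : ∀ n, (P[fun ω => f (X ω)|(ℱ n : MeasurableSpace Ω)]) =ᵐ[P]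
        fun ω => ∫ x, f x ∂π n (Y n ω) :=
      fun n => stmt8_condexp_eq P hX (hY n) (π n) (hπprob n) (hπmeas n) (hπrcd n) f
    have heq' : (P[fun ω => f (X ω)|MeasurableSpace.comap Y' inferInstance]) =ᵐ[P]
        fun ω => ∫ x, f x ∂π' (Y' ω) :=
      stmt8_condexp_eq P hX hY' π' hπ'prob hπ'meas hπ'rcd f
    filter_upwards [hcond, ae_all_iff.mpr heqn, heq'] with ω h1 h2 h3
    rw [← h3]
    exact h1.congr h2
  -- Step 2: countable family of test functions
  obtain ⟨D, hDcount, hDdense⟩ := TopologicalSpace.exists_countable_dense E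
  haveI := hDcount.to_subtype
  have hae : ∀ᵐ ω ∂P, ∀ L : List (↥D × ℚ × ℚ),
      Tendsto (fun n => ∫ x,
          stmt8Sup (L.map fun p => stmt8Bump (p.1 : E) p.2.1 p.2.2) x ∂π n (Y n ω))
        atTop (𝓝 (∫ x, stmt8Sup (L.map fun p => stmt8Bump (p.1 : E) p.2.1 p.2.2) x
          ∂π' (Y' ω))) :=
    ae_all_iff.mpr fun L => key _
  filter_upwards [hae] with ω hω
  intro g
  haveI : IsProbabilityMeasure (π' (Y' ω)) := hπ'prob _
  haveI : ∀ n, IsProbabilityMeasure (π n (Y n ω)) := fun n => hπprob n _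
  exact stmt8_tendsto_of_family hDcount hDdense hω g
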